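/- Let G be an undirected bipartite graph on parts [n] ⊔ [n] with biadjacency matrix M. Then the number of permutations on G (viewing G as a symmetric digraph) equals Σ_{S,S' ⊆ [n], |S|=|S'|} per(M(S,S'))^2. -/

import Mathlib

open Finset

/-- The permanent of the submatrix of `M` with rows `S` and columns `S'`. -/
def subPer {n : ℕ} (M : Matrix (Fin n) (Fin n) ℕ) (S S' : Finset (Fin n)) : ℕ :=
  ∑ e : {x // x ∈ S} ≃ {x // x ∈ S'}, ∏ i : {x // x ∈ S}, M i (e i)

namespace Stmt12Aux

variable {n : ℕ}

/-- The permutation built from a pair of matchings. -/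
def buildPerm (S T : Finset (Fin n)) (e : {x // x ∈ S} ≃ {x // x ∈ T})
    (f : {x // x ∈ T} ≃ {x // x ∈ S}) : Equiv.Perm (Fin n ⊕ Fin n) where
  toFun v := match v with
    | .inl i => if h : i ∈ S then .inr (e ⟨i, h⟩ : {x // x ∈ T}).1 else .inl i
    | .inr j => if h : j ∈ T then .inl (f ⟨j, h⟩ : {x // x ∈ S}).1 else .inr j
  invFun v := match v with
    | .inl i => if h : i ∈ S then .inr (f.symm ⟨i, h⟩ : {x // x ∈ T}).1 else .inl i
    | .inr j => if h : j ∈ T then .inl (e.symm ⟨j, h⟩ : {x // x ∈ S}).1 else .inr j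
  left_inv v := by
    cases v with
    | inl i =>
      by_cases h : i ∈ S
      · simp only [dif_pos h]
        rw [dif_pos (e ⟨i, h⟩).2]
        simp
      · simp [h]
    | inr j =>
      by_cases h : j ∈ T
      · simp only [dif_pos h]
        rw [dif_pos (f ⟨j, h⟩).2]
        simp
      · simp [h]
  right_inv v := by
    cases v with
    | inl i =>
      by_cases h : i ∈ S
      · simp only [dif_pos h]
        rw [dif_pos (f.symm ⟨i, h⟩).2]
        simp
      · simp [h]
    | inr j =>
      by_cases h : j ∈ T
      · simp only [dif_pos h]
        rw [dif_pos (e.symm ⟨j, h⟩).2]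
        simp
      · simp [h]

lemma buildPerm_apply_inl (S T : Finset (Fin n)) (e : {x // x ∈ S} ≃ {x // x ∈ T})
    (f : {x // x ∈ T} ≃ {x // x ∈ S}) (i : Fin n) :
    buildPerm S T e f (.inl i) = if h : i ∈ S then .inr (e ⟨i, h⟩).1 else .inl i := rfl

lemma buildPerm_apply_inr (S T : Finset (Fin n)) (e : {x // x ∈ S} ≃ {x // x ∈ T})
    (f : {x // x ∈ T} ≃ {x // x ∈ S}) (j : Fin n) :
    buildPerm S T e f (.inr j) = if h : j ∈ T then .inl (f ⟨j, h⟩).1 else .inr j := rfl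

lemma buildPerm_inl_eq_iff (S T : Finset (Fin n)) (e : {x // x ∈ S} ≃ {x // x ∈ T})
    (f : {x // x ∈ T} ≃ {x // x ∈ S}) (i : Fin n) :
    buildPerm S T e f (.inl i) = .inl i ↔ i ∉ S := by
  by_cases h : i ∈ S <;> simp [buildPerm_apply_inl, h]

lemma buildPerm_inr_eq_iff (S T : Finset (Fin n)) (e : {x // x ∈ S} ≃ {x // x ∈ T})
    (f : {x // x ∈ T} ≃ {x // x ∈ S}) (j : Fin n) :
    buildPerm S T e f (.inr j) = .inr j ↔ j ∉ T := by
  by_cases h : j ∈ T <;> simp [buildPerm_apply_inr, h]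

/-- The data type of pairs of matchings. -/
abbrev DD (M : Matrix (Fin n) (Fin n) ℕ) : Type _ :=
  Σ S : Finset (Fin n), Σ T : Finset (Fin n),
    ({e : {x // x ∈ S} ≃ {x // x ∈ T} // ∀ i : {x // x ∈ S}, M i (e i) = 1} ×
     {f : {x // x ∈ T} ≃ {x // x ∈ S} // ∀ j : {x // x ∈ T}, M (f j) j = 1})

variable (M : Matrix (Fin n) (Fin n) ℕ) (G : SimpleGraph (Fin n ⊕ Fin n))
    (hG : ∀ v w, G.Adj v w ↔
      ∃ i j, ((v = Sum.inl i ∧ w = Sum.inr j) ∨ (v = Sum.inr j ∧ w = Sum.inl i)) ∧ M i j = 1)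

def psi (d : DD M) : {σ : Equiv.Perm (Fin n ⊕ Fin n) // ∀ v, σ v = v ∨ G.Adj v (σ v)} := by
  obtain ⟨S, T, ⟨e, he⟩, ⟨f, hf⟩⟩ := d
  refine ⟨buildPerm S T e f, fun v => ?_⟩
  cases v with
  | inl i =>
    by_cases h : i ∈ S
    · right
      rw [buildPerm_apply_inl, dif_pos h, hG]
      exact ⟨i, (e ⟨i, h⟩).1, Or.inl ⟨rfl, rfl⟩, he ⟨i, h⟩⟩
    · left; rw [buildPerm_apply_inl, dif_neg h]
  | inr j =>
    by_cases h : j ∈ T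
    · right
      rw [buildPerm_apply_inr, dif_pos h, hG]
      exact ⟨(f ⟨j, h⟩).1, j, Or.inr ⟨rfl, rfl⟩, hf ⟨j, h⟩⟩
    · left; rw [buildPerm_apply_inr, dif_neg h]

lemma psi_injective : Function.Injective (psi M G hG) := by
  rintro ⟨S, T, ⟨e, he⟩, ⟨f, hf⟩⟩ ⟨S', T', ⟨e', he'⟩, ⟨f', hf'⟩⟩ h
  have hperm : buildPerm S T e f = buildPerm S' T' e' f' := congrArg Subtype.val h
  have hS : S = S' := by
    ext i
    rw [← not_iff_not, ← buildPerm_inl_eq_iff S T e f i, ← buildPerm_inl_eq_iff S' T' e' f' i,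
      hperm]
  subst hS
  have hT : T = T' := by
    ext j
    rw [← not_iff_not, ← buildPerm_inr_eq_iff S T e f j, ← buildPerm_inr_eq_iff S T' e' f' j,
      hperm]
  subst hT
  have happ : ∀ v, buildPerm S T e f v = buildPerm S T e' f' v := fun v => by rw [hperm]
  have hee : e = e' := by
    apply Equiv.ext
    intro x
    have h1 := happ (.inl x.1)
    rw [buildPerm_apply_inl, buildPerm_apply_inl, dif_pos x.2, dif_pos x.2] at h1
    exact Subtype.ext (Sum.inr.inj h1)
  subst hee
  have hff : f = f' := by
    apply Equiv.ext
    intro x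
    have h1 := happ (.inr x.1)
    rw [buildPerm_apply_inr, buildPerm_apply_inr, dif_pos x.2, dif_pos x.2] at h1
    exact Subtype.ext (Sum.inl.inj h1)
  subst hff
  rfl

lemma psi_surjective : Function.Surjective (psi M G hG) := by
  rintro ⟨σ, hσ⟩
  classical
  have key_l : ∀ i : Fin n, σ (Sum.inl i) ≠ Sum.inl i →
      ∃ j, σ (Sum.inl i) = Sum.inr j ∧ M i j = 1 := by
    intro i hi
    rcases hσ (Sum.inl i) with h | h
    · exact absurd h hi
    · rw [hG] at h
      obtain ⟨i', j, hc, hM⟩ := h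
      rcases hc with ⟨h1, h2⟩ | ⟨h1, h2⟩
      · obtain rfl := Sum.inl.inj h1
        exact ⟨j, h2, hM⟩
      · simp at h1
  have key_r : ∀ j : Fin n, σ (Sum.inr j) ≠ Sum.inr j →
      ∃ i, σ (Sum.inr j) = Sum.inl i ∧ M i j = 1 := by
    intro j hj
    rcases hσ (Sum.inr j) with h | h
    · exact absurd h hj
    · rw [hG] at h
      obtain ⟨i, j', hc, hM⟩ := h
      rcases hc with ⟨h1, h2⟩ | ⟨h1, h2⟩
      · simp at h1
      · obtain rfl := Sum.inr.inj h1
        exact ⟨i, h2, hM⟩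
  set S : Finset (Fin n) := univ.filter (fun i => σ (Sum.inl i) ≠ Sum.inl i) with hSdef
  set T : Finset (Fin n) := univ.filter (fun j => σ (Sum.inr j) ≠ Sum.inr j) with hTdef
  have hmemS : ∀ i, i ∈ S ↔ σ (Sum.inl i) ≠ Sum.inl i := by
    intro i; simp [hSdef]
  have hmemT : ∀ j, j ∈ T ↔ σ (Sum.inr j) ≠ Sum.inr j := by
    intro j; simp [hTdef]
  -- the forward matching
  have eSpec : ∀ x : {x // x ∈ S},
      σ (Sum.inl x.1) = Sum.inr ((key_l x.1 ((hmemS x.1).mp x.2)).choose) ∧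
      M x.1 ((key_l x.1 ((hmemS x.1).mp x.2)).choose) = 1 :=
    fun x => (key_l x.1 ((hmemS x.1).mp x.2)).choose_spec
  have eFunMem : ∀ x : {x // x ∈ S}, (key_l x.1 ((hmemS x.1).mp x.2)).choose ∈ T := by
    intro x
    rw [hmemT]
    intro hfix
    have h1 : σ (Sum.inl x.1) = σ (Sum.inr ((key_l x.1 ((hmemS x.1).mp x.2)).choose)) :=
      (eSpec x).1.trans hfix.symm
    exact Sum.inl_ne_inr (σ.injective h1)
  set eFun : {x // x ∈ S} → {x // x ∈ T} :=
    fun x => ⟨(key_l x.1 ((hmemS x.1).mp x.2)).choose, eFunMem x⟩ with heFun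
  have eBij : Function.Bijective eFun := by
    constructor
    · intro x y hxy
      have h1 : σ (Sum.inl x.1) = σ (Sum.inl y.1) :=
        (eSpec x).1.trans ((congrArg Sum.inr (congrArg Subtype.val hxy)).trans (eSpec y).1.symm)
      exact Subtype.ext (Sum.inl.inj (σ.injective h1))
    · rintro ⟨j, hj⟩
      obtain ⟨v, hv⟩ : ∃ v, σ v = Sum.inr j := ⟨σ.symm (Sum.inr j), by simp⟩
      cases v with
      | inl i =>
        have hiS : i ∈ S := by rw [hmemS, hv]; exact fun h => Sum.inl_ne_inr h.symm
        exact ⟨⟨i, hiS⟩, Subtype.ext (Sum.inr.inj ((eSpec ⟨i, hiS⟩).1.symm.trans hv))⟩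
      | inr j' =>
        exfalso
        rcases hσ (Sum.inr j') with h | h
        · have hjj : j' = j := Sum.inr.inj (h.symm.trans hv)
          rw [hjj] at h
          exact ((hmemT j).mp hj) h
        · rw [hv, hG] at h
          obtain ⟨i, j₀, hc, _⟩ := h
          rcases hc with ⟨h1, _⟩ | ⟨_, h2⟩
          · simp at h1
          · simp at h2
  -- the backward matching
  have fSpec : ∀ x : {x // x ∈ T},
      σ (Sum.inr x.1) = Sum.inl ((key_r x.1 ((hmemT x.1).mp x.2)).choose) ∧
      M ((key_r x.1 ((hmemT x.1).mp x.2)).choose) x.1 = 1 :=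
    fun x => (key_r x.1 ((hmemT x.1).mp x.2)).choose_spec
  have fFunMem : ∀ x : {x // x ∈ T}, (key_r x.1 ((hmemT x.1).mp x.2)).choose ∈ S := by
    intro x
    rw [hmemS]
    intro hfix
    have h1 : σ (Sum.inr x.1) = σ (Sum.inl ((key_r x.1 ((hmemT x.1).mp x.2)).choose)) :=
      (fSpec x).1.trans hfix.symm
    exact Sum.inl_ne_inr (σ.injective h1).symm
  set fFun : {x // x ∈ T} → {x // x ∈ S} :=
    fun x => ⟨(key_r x.1 ((hmemT x.1).mp x.2)).choose, fFunMem x⟩ with hfFun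
  have fBij : Function.Bijective fFun := by
    constructor
    · intro x y hxy
      have h1 : σ (Sum.inr x.1) = σ (Sum.inr y.1) :=
        (fSpec x).1.trans ((congrArg Sum.inl (congrArg Subtype.val hxy)).trans (fSpec y).1.symm)
      exact Subtype.ext (Sum.inr.inj (σ.injective h1))
    · rintro ⟨i, hi⟩
      obtain ⟨v, hv⟩ : ∃ v, σ v = Sum.inl i := ⟨σ.symm (Sum.inl i), by simp⟩
      cases v with
      | inr j =>
        have hjT : j ∈ T := by rw [hmemT, hv]; exact fun h => Sum.inl_ne_inr h
        exact ⟨⟨j, hjT⟩, Subtype.ext (Sum.inl.inj ((fSpec ⟨j, hjT⟩).1.symm.trans hv))⟩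
      | inl i' =>
        exfalso
        rcases hσ (Sum.inl i') with h | h
        · have hii : i' = i := Sum.inl.inj (h.symm.trans hv)
          rw [hii] at h
          exact ((hmemS i).mp hi) h
        · rw [hv, hG] at h
          obtain ⟨i₀, j₀, hc, _⟩ := h
          rcases hc with ⟨_, h2⟩ | ⟨h1, _⟩
          · simp at h2
          · simp at h1
  set e : {x // x ∈ S} ≃ {x // x ∈ T} := Equiv.ofBijective eFun eBij with he
  set f : {x // x ∈ T} ≃ {x // x ∈ S} := Equiv.ofBijective fFun fBij with hf
  refine ⟨⟨S, T, ⟨e, fun x => (eSpec x).2⟩, ⟨f, fun x => (fSpec x).2⟩⟩, ?_⟩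
  apply Subtype.ext
  show buildPerm S T e f = σ
  apply Equiv.ext
  intro v
  cases v with
  | inl i =>
    rw [buildPerm_apply_inl]
    by_cases h : i ∈ S
    · rw [dif_pos h]
      exact ((eSpec ⟨i, h⟩).1).symm
    · rw [dif_neg h]
      have := (hmemS i).not.mp h
      rw [not_not] at this
      exact this.symm
  | inr j =>
    rw [buildPerm_apply_inr]
    by_cases h : j ∈ T
    · rw [dif_pos h]
      exact ((fSpec ⟨j, h⟩).1).symm
    · rw [dif_neg h]
      have := (hmemT j).not.mp h
      rw [not_not] at this
      exact this.symm

end Stmt12Aux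

open Stmt12Aux

lemma prod_eq_ite {n : ℕ} (M : Matrix (Fin n) (Fin n) ℕ)
    (h01 : ∀ i j, M i j = 0 ∨ M i j = 1) (S T : Finset (Fin n))
    (e : {x // x ∈ S} ≃ {x // x ∈ T}) :
    (∏ i : {x // x ∈ S}, M i (e i)) = if ∀ i : {x // x ∈ S}, M i (e i) = 1 then 1 else 0 := by
  by_cases hall : ∀ i : {x // x ∈ S}, M i (e i) = 1
  · rw [if_pos hall]
    exact Finset.prod_eq_one (fun i _ => hall i)
  · rw [if_neg hall]
    push_neg at hall
    obtain ⟨i, hi⟩ := hall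
    exact Finset.prod_eq_zero (Finset.mem_univ i) ((h01 i (e i)).resolve_right hi)

lemma card_EE {n : ℕ} (M : Matrix (Fin n) (Fin n) ℕ)
    (h01 : ∀ i j, M i j = 0 ∨ M i j = 1) (S T : Finset (Fin n)) :
    Fintype.card {e : {x // x ∈ S} ≃ {x // x ∈ T} // ∀ i : {x // x ∈ S}, M i (e i) = 1} = subPer M S T := by
  rw [Fintype.card_subtype, subPer]
  rw [Finset.sum_congr rfl (fun e _ => prod_eq_ite M h01 S T e)]
  simp [Finset.sum_ite_eq, Finset.sum_boole]

def ffEquiv {n : ℕ} (M : Matrix (Fin n) (Fin n) ℕ) (S T : Finset (Fin n)) :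
    {f : {x // x ∈ T} ≃ {x // x ∈ S} // ∀ j : {x // x ∈ T}, M (f j) j = 1} ≃
    {e : {x // x ∈ S} ≃ {x // x ∈ T} // ∀ i : {x // x ∈ S}, M i (e i) = 1} where
  toFun f := ⟨f.1.symm, fun i => by simpa using f.2 (f.1.symm i)⟩
  invFun e := ⟨e.1.symm, fun j => by simpa using e.2 (e.1.symm j)⟩
  left_inv f := by simp
  right_inv e := by simp

lemma card_FF {n : ℕ} (M : Matrix (Fin n) (Fin n) ℕ)
    (h01 : ∀ i j, M i j = 0 ∨ M i j = 1) (S T : Finset (Fin n)) :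
    Fintype.card {f : {x // x ∈ T} ≃ {x // x ∈ S} // ∀ j : {x // x ∈ T}, M (f j) j = 1} = subPer M S T := by
  rw [Fintype.card_congr (ffEquiv M S T), card_EE M h01 S T]

lemma subPer_eq_zero {n : ℕ} (M : Matrix (Fin n) (Fin n) ℕ) (S T : Finset (Fin n))
    (h : T.card ≠ S.card) : subPer M S T = 0 := by
  have : IsEmpty ({x // x ∈ S} ≃ {x // x ∈ T}) := by
    constructor
    intro e
    apply h
    rw [← Fintype.card_coe S, ← Fintype.card_coe T]
    exact (Fintype.card_congr e).symm
  rw [subPer, Finset.univ_eq_empty, Finset.sum_empty]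

/-- For an undirected bipartite graph on `[n] ⊔ [n]` with biadjacency matrix `M`, the number
of permutations on the graph equals `∑_{S,S' ⊆ [n], |S|=|S'|} per(M(S,S'))²`. -/
theorem stmt_12 (n : ℕ) (M : Matrix (Fin n) (Fin n) ℕ)
    (h01 : ∀ i j, M i j = 0 ∨ M i j = 1)
    (G : SimpleGraph (Fin n ⊕ Fin n))
    (hG : ∀ v w, G.Adj v w ↔
      ∃ i j, ((v = Sum.inl i ∧ w = Sum.inr j) ∨ (v = Sum.inr j ∧ w = Sum.inl i)) ∧ M i j = 1) :
    {σ : Equiv.Perm (Fin n ⊕ Fin n) | ∀ v, σ v = v ∨ G.Adj v (σ v)}.ncard =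
      ∑ S ∈ (univ : Finset (Fin n)).powerset,
        ∑ S' ∈ (univ : Finset (Fin n)).powerset.filter (fun S' => S'.card = S.card),
          (subPer M S S') ^ 2 := by
  classical
  rw [← Nat.card_coe_set_eq]
  have hcard : Nat.card {σ : Equiv.Perm (Fin n ⊕ Fin n) // ∀ v, σ v = v ∨ G.Adj v (σ v)} =
      Nat.card (DD M) :=
    (Nat.card_congr (Equiv.ofBijective (psi M G hG)
      ⟨psi_injective M G hG, psi_surjective M G hG⟩)).symm
  rw [show (Nat.card ↥{σ : Equiv.Perm (Fin n ⊕ Fin n) | ∀ v, σ v = v ∨ G.Adj v (σ v)}) =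
      Nat.card {σ : Equiv.Perm (Fin n ⊕ Fin n) // ∀ v, σ v = v ∨ G.Adj v (σ v)} from rfl,
    hcard, Nat.card_eq_fintype_card]
  rw [Fintype.card_sigma]
  have step : ∀ S : Finset (Fin n),
      (∑ T : Finset (Fin n), Fintype.card
        (({e : {x // x ∈ S} ≃ {x // x ∈ T} // ∀ i : {x // x ∈ S}, M i (e i) = 1} ×
          {f : {x // x ∈ T} ≃ {x // x ∈ S} // ∀ j : {x // x ∈ T}, M (f j) j = 1}))) =
      ∑ S' ∈ (univ : Finset (Finset (Fin n))).filter (fun S' => S'.card = S.card),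
        (subPer M S S') ^ 2 := by
    intro S
    rw [Finset.sum_filter]
    apply Finset.sum_congr rfl
    intro T _
    rw [Fintype.card_prod, card_EE M h01 S T, card_FF M h01 S T, ← sq]
    by_cases h : T.card = S.card
    · rw [if_pos h]
    · rw [if_neg h, subPer_eq_zero M S T h, zero_pow]
      norm_num
  rw [Finset.powerset_univ]
  exact Finset.sum_congr rfl (fun S _ => by rw [Fintype.card_sigma, step S])
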